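/- Separating pairs are not preserved under union of transition systems: there exist a complete finitely branching synchronous system, states q₁, q₂, q_u, and inputs a₁ ≠ a₂ such that out(q_u) = out(q₁) = out(q₂); for every input a and state r, q_u →[a] r holds if and only if q₁ →[a] r or q₂ →[a] r; the pair (a₁,a₂) is a separating pair of q₁ and also of q₂; yet neither (a₁,a₂) nor (a₂,a₁) is a separating pair of q_u. -/

import Mathlib

/-- A synchronous system over input set `In` and output set `Out`,
with state set `Q`, transition relation `E` and output function `out`. -/
structure SyncSys (In : Type*) (Out : Type*) (Q : Type*) where
  E : Q → In → Q → Prop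
  out : Q → Out

namespace SyncSys

variable {In Out Q : Type*}

/-- A system is complete if every state has a successor on every input. -/
def Complete (S : SyncSys In Out Q) : Prop := ∀ p a, ∃ q, S.E p a q

/-- A system is finitely branching if every state has finitely many successors on each input. -/
def FinBranch (S : SyncSys In Out Q) : Prop := ∀ p a, {q | S.E p a q}.Finite

/-- `R` is a bisimulation on the states of `S`. -/
def IsBisimulation (S : SyncSys In Out Q) (R : Q → Q → Prop) : Prop :=
  ∀ p q, R p q → S.out p = S.out q ∧
    (∀ a p', S.E p a p' → ∃ q', S.E q a q' ∧ R p' q') ∧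
    (∀ a q', S.E q a q' → ∃ p', S.E p a p' ∧ R p' q')

/-- `p` and `q` are bisimilar: they are related by some bisimulation. -/
def Bisim (S : SyncSys In Out Q) (p q : Q) : Prop :=
  ∃ R, IsBisimulation S R ∧ R p q

/-- `IsRun S q w qs`: `qs` is a run on the finite input word `w` starting from `q`
(the list `qs` is the sequence of states `q₀, q₁, …, qₙ`, with `q₀ = q`). -/
inductive IsRun (S : SyncSys In Out Q) : Q → List In → List Q → Prop
  | nil (q : Q) : IsRun S q [] [q]
  | cons {q q' : Q} {a : In} {w : List In} {qs : List Q} :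
      S.E q a q' → IsRun S q' w qs → IsRun S q (a :: w) (q :: qs)

/-- The output language of `S` at `q` on the input word `w`:
the output words of all runs on `w` from `q`. -/
def lang (S : SyncSys In Out Q) (q : Q) (w : List In) : Set (List Out) :=
  { o | ∃ qs, IsRun S q w qs ∧ o = qs.map S.out }

/-- `(a₁, a₂)` is a separating pair of state `q`. -/
def SepPair (S : SyncSys In Out Q) (a₁ a₂ : In) (q : Q) : Prop :=
  a₁ ≠ a₂ ∧ ∃ q₁, S.E q a₁ q₁ ∧ ∀ q₂, S.E q a₂ q₂ → ¬ Bisim S q₁ q₂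

/-- A state is reactive if it has a separating pair. -/
def Reactive (S : SyncSys In Out Q) (q : Q) : Prop := ∃ a₁ a₂, SepPair S a₁ a₂ q

/-- `(a₁, a₂)` is a strongly separating pair of the pair of states `(q₁, q₂)`. -/
def SSP (S : SyncSys In Out Q) (a₁ a₂ : In) (q₁ q₂ : Q) : Prop :=
  a₁ ≠ a₂ ∧
    ((∃ q₁', S.E q₁ a₁ q₁' ∧ ∀ q₂', S.E q₂ a₂ q₂' → ¬ Bisim S q₁' q₂') ∨
     (∃ q₁', S.E q₁ a₂ q₁' ∧ ∀ q₂', S.E q₂ a₁ q₂' → ¬ Bisim S q₁' q₂'))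

/-- Sequential composition `S_g ∘ S_f` of `S_f : (A, B)` and `S_g : (B, C)`. -/
def seqComp {A B C Qf Qg : Type*} (Sf : SyncSys A B Qf) (Sg : SyncSys B C Qg) :
    SyncSys A C (Qf × Qg) where
  E := fun pq a pq' => Sf.E pq.1 a pq'.1 ∧ Sg.E pq.2 (Sf.out pq.1) pq'.2
  out := fun pq => Sg.out pq.2

/-- Parallel composition `S_f ∥ S_g` of `S_f : (A, B)` and `S_g : (C, D)`. -/
def parComp {A B C D Qf Qg : Type*} (Sf : SyncSys A B Qf) (Sg : SyncSys C D Qg) :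
    SyncSys (A × C) (B × D) (Qf × Qg) where
  E := fun pq ac pq' => Sf.E pq.1 ac.1 pq'.1 ∧ Sg.E pq.2 ac.2 pq'.2
  out := fun pq => (Sf.out pq.1, Sg.out pq.2)

end SyncSys

inductive St | q1 | q2 | qu | X | Y
  deriving DecidableEq

instance : Fintype St := ⟨{.q1, .q2, .qu, .X, .Y}, by intro x; cases x <;> simp⟩

open St in
def myE : St → Bool → St → Prop
  | .q1, true, r => r = .X
  | .q1, false, r => r = .Y
  | .q2, true, r => r = .Y
  | .q2, false, r => r = .X
  | .qu, _, r => r = .X ∨ r = .Y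
  | .X, _, r => r = .X
  | .Y, _, r => r = .Y

def myOut : St → Bool
  | .Y => false
  | _ => true

def myS : SyncSys Bool Bool St := ⟨myE, myOut⟩

lemma bisim_refl {In Out Q : Type*} (S : SyncSys In Out Q) (q : Q) : S.Bisim q q :=
  ⟨Eq, fun p q' h => by
    subst h
    exact ⟨rfl, fun a p' h => ⟨p', h, rfl⟩, fun a q' h => ⟨q', h, rfl⟩⟩, rfl⟩

lemma not_bisim_XY : ¬ myS.Bisim .X .Y := by
  rintro ⟨R, hR, hXY⟩
  have := (hR _ _ hXY).1
  simp [myS, myOut] at this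

open SyncSys in
/-- separating pairs are not preserved under union of transition
systems. -/
theorem sepPair_not_preserved_by_union :
    ∃ (In Out Q : Type) (S : SyncSys In Out Q) (q₁ q₂ qu : Q) (a₁ a₂ : In),
      S.Complete ∧ S.FinBranch ∧ a₁ ≠ a₂ ∧
      S.out qu = S.out q₁ ∧ S.out qu = S.out q₂ ∧
      (∀ (a : In) (r : Q), S.E qu a r ↔ (S.E q₁ a r ∨ S.E q₂ a r)) ∧
      SepPair S a₁ a₂ q₁ ∧ SepPair S a₁ a₂ q₂ ∧
      ¬ SepPair S a₁ a₂ qu ∧ ¬ SepPair S a₂ a₁ qu := by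
  refine ⟨Bool, Bool, St, myS, .q1, .q2, .qu, true, false, ?_, ?_, by simp, rfl, rfl,
    ?_, ?_, ?_, ?_, ?_⟩
  · rintro (_ | _ | _ | _ | _) (_ | _) <;>
      first
        | exact ⟨.X, rfl⟩
        | exact ⟨.Y, rfl⟩
        | exact ⟨.X, Or.inl rfl⟩
  · intro p a; exact Set.toFinite _
  · intro a r
    cases a <;> constructor <;> rintro (rfl | rfl | _) <;>
      simp_all [myS, myE]
  · exact ⟨by simp, .X, rfl, by rintro _ rfl; exact not_bisim_XY⟩
  · refine ⟨by simp, .Y, rfl, ?_⟩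
    rintro _ rfl ⟨R, hR, hYX⟩
    have := (hR _ _ hYX).1
    simp [myS, myOut] at this
  · rintro ⟨-, q', hq', h⟩
    rcases hq' with rfl | rfl
    · exact h .X (Or.inl rfl) (bisim_refl _ _)
    · exact h .Y (Or.inr rfl) (bisim_refl _ _)
  · rintro ⟨-, q', hq', h⟩
    rcases hq' with rfl | rfl
    · exact h .X (Or.inl rfl) (bisim_refl _ _)
    · exact h .Y (Or.inr rfl) (bisim_refl _ _)
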